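/- Let $X = \{x \in V \mid (x, \alpha_i) \leq 1 \text{ for all } i, \ (x,\theta) \geq -2\}$. Then $X$ is the simplex with vertices $\check\rho$ and $\check\rho - (h+1)\check\omega_i/m_i$ for $i = 1, \dots, n$, and $X = t_{\check\rho}\, w_0(\overline{C}_{h+1})$, where $t_{\check\rho}$ is translation by $\check\rho$, $w_0$ is the longest element of $W$, and $\overline{C}_{h+1} = \{x \in \overline{C}_\infty \mid (x,\theta) \leq h+1\}$. -/

import Mathlib

open scoped RealInnerProductSpace

/-- Let `α i` be the simple roots (a basis of `V`), `ω i` the fundamental coweights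
(dual basis), `θ = ∑ m i • α i` the highest root, `h = 1 + ∑ m i` the Coxeter number,
`ρ̌ = ∑ ω i`, and `w₀` the longest element of the Weyl group (so `w₀` permutes the
negatives of the simple roots and `w₀ θ = -θ`).  Then
`X = {x | (x, α i) ≤ 1 ∀ i, (x, θ) ≥ -2}` is the simplex with vertices `ρ̌` and
`ρ̌ - (h+1)·ωᵢ/mᵢ` for `i = 1, …, n`, and `X = t_ρ̌ w₀ (C̄_{h+1})`, where
`C̄_{h+1} = {x | (x, α i) ≥ 0 ∀ i, (x, θ) ≤ h + 1}`. -/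
theorem simplex_X_eq_translate_of_alcove {V : Type*} [NormedAddCommGroup V]
    [InnerProductSpace ℝ V] [FiniteDimensional ℝ V] {n : ℕ}
    (α ω : Fin n → V) (m : Fin n → ℕ) (θ ρ : V) (h : ℕ)
    (w₀ : V ≃ₗᵢ[ℝ] V) (σ : Equiv.Perm (Fin n))
    (hind : LinearIndependent ℝ α)
    (hspan : Submodule.span ℝ (Set.range α) = ⊤)
    (hdual : ∀ i j, ⟪ω i, α j⟫ = if i = j then 1 else 0)
    (hθ : θ = ∑ i, (m i : ℝ) • α i) (hm : ∀ i, 0 < m i)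
    (hh : h = 1 + ∑ i, m i)
    (hρ : ρ = ∑ i, ω i)
    (hw₀ : ∀ i, w₀ (α i) = - α (σ i)) (hw₀θ : w₀ θ = -θ) :
    {x : V | (∀ i, ⟪α i, x⟫ ≤ 1) ∧ -2 ≤ ⟪θ, x⟫}
      = convexHull ℝ (insert ρ (Set.range fun i => ρ - (((h : ℝ) + 1) / (m i : ℝ)) • ω i)) ∧
    {x : V | (∀ i, ⟪α i, x⟫ ≤ 1) ∧ -2 ≤ ⟪θ, x⟫}
      = (fun x => ρ + w₀ x) '' {x : V | (∀ i, 0 ≤ ⟪α i, x⟫) ∧ ⟪θ, x⟫ ≤ (h : ℝ) + 1} := by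
  classical
  -- basic inner product facts
  have hao : ∀ j i : Fin n, ⟪α j, ω i⟫ = if i = j then 1 else 0 := fun j i => by
    rw [real_inner_comm]; exact hdual i j
  have hαρ : ∀ j, ⟪α j, ρ⟫ = 1 := by
    intro j
    rw [hρ, inner_sum]
    simp [hao]
  have hαω : ∀ j i, ⟪α j, ω i⟫ = if i = j then 1 else 0 := hao
  have hθx : ∀ x : V, ⟪θ, x⟫ = ∑ i, (m i : ℝ) * ⟪α i, x⟫ := by
    intro x
    rw [hθ, sum_inner]
    simp [real_inner_smul_left]
  have hθρ : ⟪θ, ρ⟫ = (h : ℝ) - 1 := by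
    rw [hθx]
    simp only [hαρ, mul_one, hh]
    push_cast
    ring
  have hθω : ∀ i, ⟪θ, ω i⟫ = (m i : ℝ) := by
    intro i
    rw [hθ, sum_inner]
    simp [real_inner_smul_left, hao]
  -- coordinates: x = ∑ ⟪α i, x⟫ • ω i
  have hcoord : ∀ x : V, x = ∑ i, ⟪α i, x⟫ • ω i := by
    intro x
    set y := ∑ i, ⟪α i, x⟫ • ω i with hy
    have hperp : ∀ j, ⟪x - y, α j⟫ = 0 := by
      intro j
      have : ⟪α j, y⟫ = ⟪α j, x⟫ := by
        rw [hy, inner_sum]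
        simp [real_inner_smul_right, hαω]
      rw [real_inner_comm, inner_sub_right, this, sub_self]
    have hker : Submodule.span ℝ (Set.range α) ≤ LinearMap.ker (innerSL ℝ (x - y) : V →ₗ[ℝ] ℝ) := by
      rw [Submodule.span_le]
      rintro _ ⟨j, rfl⟩
      simpa [inner_sub_left] using hperp j
    rw [hspan, top_le_iff] at hker
    have h0 : ⟪x - y, x - y⟫ = 0 := by
      have hmem : (x - y) ∈ LinearMap.ker (innerSL ℝ (x - y) : V →ₗ[ℝ] ℝ) := by
        rw [hker]; exact Submodule.mem_top
      exact LinearMap.mem_ker.mp hmem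
    have := inner_self_eq_zero.mp h0
    have : x = y := by rwa [sub_eq_zero] at this
    exact this
  have hm' : ∀ i, (0:ℝ) < (m i : ℝ) := fun i => by exact_mod_cast hm i
  have hh1 : (0:ℝ) < (h : ℝ) + 1 := by positivity
  constructor
  · -- Part 1: simplex
    apply Set.Subset.antisymm
    · -- X ⊆ hull
      intro x hx
      obtain ⟨hx1, hx2⟩ := hx
      set c : Fin n → ℝ := fun i => ⟪α i, x⟫ with hc
      set w : Option (Fin n) → ℝ := fun o => o.elim
        (1 - ∑ i, (m i : ℝ) * (1 - c i) / ((h : ℝ) + 1))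
        (fun i => (m i : ℝ) * (1 - c i) / ((h : ℝ) + 1)) with hw
      set z : Option (Fin n) → V := fun o => o.elim ρ
        (fun i => ρ - (((h : ℝ) + 1) / (m i : ℝ)) • ω i) with hz
      have hwsum : ∑ o : Option (Fin n), w o = 1 := by
        rw [Fintype.sum_option]
        simp [hw]
      have hw0 : ∀ o, 0 ≤ w o := by
        rintro (_ | i)
        · -- weight of ρ
          simp only [hw, Option.elim]
          have hsum : ∑ i, (m i : ℝ) * (1 - c i) / ((h : ℝ) + 1)
              = ((h : ℝ) - 1 - ⟪θ, x⟫) / ((h : ℝ) + 1) := by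
            rw [← Finset.sum_div]
            congr 1
            rw [hθx]
            have hmsum : ∑ i, (m i : ℝ) = (h : ℝ) - 1 := by
              rw [hh]; push_cast; simp
            rw [← hmsum, ← Finset.sum_sub_distrib]
            congr 1
            ext i
            ring
          rw [hsum]
          rw [sub_nonneg, div_le_one hh1]
          linarith
        · simp only [hw, Option.elim]
          have : 0 ≤ 1 - c i := by simp only [hc]; linarith [hx1 i]
          positivity
      have hzmem : ∀ o, z o ∈
          (insert ρ (Set.range fun i => ρ - (((h : ℝ) + 1) / (m i : ℝ)) • ω i)) := by
        rintro (_ | i)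
        · exact Set.mem_insert _ _
        · exact Set.mem_insert_iff.mpr (Or.inr ⟨i, rfl⟩)
      have := Finset.centerMass_mem_convexHull (Finset.univ : Finset (Option (Fin n)))
        (fun o _ => hw0 o) (by rw [hwsum]; norm_num) (fun o _ => hzmem o)
      rw [Finset.centerMass_eq_of_sum_1 _ _ hwsum] at this
      have hcomb : ∑ o : Option (Fin n), w o • z o = x := by
        rw [Fintype.sum_option]
        simp only [hw, hz, Option.elim]
        have hterm : ∀ i : Fin n,
            ((m i : ℝ) * (1 - c i) / ((h : ℝ) + 1)) •
              (ρ - (((h : ℝ) + 1) / (m i : ℝ)) • ω i)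
            = ((m i : ℝ) * (1 - c i) / ((h : ℝ) + 1)) • ρ - (1 - c i) • ω i := by
          intro i
          have hmne : (m i : ℝ) ≠ 0 := (hm' i).ne'
          have hhne : ((h : ℝ) + 1) ≠ 0 := hh1.ne'
          rw [smul_sub, smul_smul]
          congr 2
          field_simp
        rw [Finset.sum_congr rfl (fun i _ => hterm i), Finset.sum_sub_distrib,
          ← Finset.sum_smul]
        have key : ∀ (s : ℝ) (t : V), (1 - s) • ρ + (s • ρ - t) = ρ - t := by
          intro s t
          have h1 : (1 - s) + s = 1 := by ring
          rw [add_sub_assoc', ← add_smul, h1, one_smul]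
        rw [key, hρ, ← Finset.sum_sub_distrib]
        have : ∀ i : Fin n, ω i - (1 - c i) • ω i = c i • ω i := by
          intro i
          rw [sub_smul, one_smul, sub_sub_cancel]
        rw [Finset.sum_congr rfl (fun i _ => this i)]
        exact (hcoord x).symm
      rwa [hcomb] at this
    · -- hull ⊆ X
      apply convexHull_min
      · rintro v (rfl | ⟨i, rfl⟩)
        · constructor
          · intro j; rw [hαρ]
          · rw [hθρ]
            have : (1:ℝ) ≤ (h : ℝ) := by
              have : 1 ≤ h := by rw [hh]; omega
              exact_mod_cast this
            linarith
        · constructor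
          · intro j
            rw [inner_sub_right, hαρ, real_inner_smul_right, hαω]
            rcases eq_or_ne i j with rfl | hij
            · have h3 : 0 ≤ ((h : ℝ) + 1) / (m i : ℝ) := by positivity
              rw [if_pos rfl, mul_one]
              linarith
            · simp [hij]
          · rw [inner_sub_right, hθρ, real_inner_smul_right, hθω]
            rw [div_mul_cancel₀ _ (ne_of_gt (hm' i))]
            linarith
      · -- convexity of X
        intro x hx y hy a b ha hb hab
        constructor
        · intro i
          rw [inner_add_right, real_inner_smul_right, real_inner_smul_right]
          calc a * ⟪α i, x⟫ + b * ⟪α i, y⟫ ≤ a * 1 + b * 1 := by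
                apply add_le_add
                · exact mul_le_mul_of_nonneg_left (hx.1 i) ha
                · exact mul_le_mul_of_nonneg_left (hy.1 i) hb
            _ = 1 := by rw [mul_one, mul_one, hab]
        · rw [inner_add_right, real_inner_smul_right, real_inner_smul_right]
          have h1 : a * (-2) ≤ a * ⟪θ, x⟫ := mul_le_mul_of_nonneg_left hx.2 ha
          have h2 : b * (-2) ≤ b * ⟪θ, y⟫ := mul_le_mul_of_nonneg_left hy.2 hb
          nlinarith
  · -- Part 2: translate of alcove
    have hw₀symm : ∀ i, w₀.symm (α i) = - α (σ.symm i) := by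
      intro i
      have h1 := hw₀ (σ.symm i)
      rw [Equiv.apply_symm_apply] at h1
      calc w₀.symm (α i) = w₀.symm (-(w₀ (α (σ.symm i)))) := by rw [h1, neg_neg]
        _ = - α (σ.symm i) := by simp
    have hw₀θsymm : w₀.symm θ = -θ := by
      have h2 : w₀.symm (w₀ (-θ)) = -θ := w₀.symm_apply_apply _
      rwa [map_neg, hw₀θ, neg_neg] at h2
    ext y
    simp only [Set.mem_setOf_eq, Set.mem_image]
    constructor
    · rintro ⟨hy1, hy2⟩
      refine ⟨w₀.symm (y - ρ), ⟨?_, ?_⟩, by simp⟩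
      · intro i
        have : ⟪α i, w₀.symm (y - ρ)⟫ = ⟪w₀ (α i), y - ρ⟫ := by
          rw [← w₀.inner_map_map (α i) (w₀.symm (y - ρ)), w₀.apply_symm_apply]
        rw [this, hw₀ i, inner_neg_left, inner_sub_right, hαρ]
        have := hy1 (σ i)
        linarith
      · have : ⟪θ, w₀.symm (y - ρ)⟫ = ⟪w₀ θ, y - ρ⟫ := by
          rw [← w₀.inner_map_map θ (w₀.symm (y - ρ)), w₀.apply_symm_apply]
        rw [this, hw₀θ, inner_neg_left, inner_sub_right, hθρ]
        linarith
    · rintro ⟨x, ⟨hx1, hx2⟩, rfl⟩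
      constructor
      · intro i
        have : ⟪α i, w₀ x⟫ = ⟪w₀.symm (α i), x⟫ := by
          rw [← w₀.inner_map_map (w₀.symm (α i)) x, w₀.apply_symm_apply]
        rw [inner_add_right, hαρ, this, hw₀symm, inner_neg_left]
        have := hx1 (σ.symm i)
        linarith
      · have : ⟪θ, w₀ x⟫ = ⟪w₀.symm θ, x⟫ := by
          rw [← w₀.inner_map_map (w₀.symm θ) x, w₀.apply_symm_apply]
        rw [inner_add_right, hθρ, this, hw₀θsymm, inner_neg_left]
        linarith
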